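/- Let Z, A ∈ M_m(ℝ) and for each integer n ≥ 0 let 𝒳_n = { X ∈ M_m(ℝ) : {Z A^(k) X} = 0 for all 0 ≤ k ≤ n }. If 𝒳_n = 𝒳_{n+1} for some n ≥ 0, then 𝒳_n = 𝒳_k for every k ≥ n. -/
import Mathlib


open Matrix

/-- The iterated commutator `{Z A^(n)}`: `{Z A^(0)} = Z`,
`{Z A^(n+1)} = [{Z A^(n)}, A]` where `[X, Y] = X*Y - Y*X`. -/
def itComm {m : ℕ} (Z A : Matrix (Fin m) (Fin m) ℝ) : ℕ → Matrix (Fin m) (Fin m) ℝ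
  | 0 => Z
  | n + 1 => itComm Z A n * A - A * itComm Z A n

/-- The solution set `𝒳_n` of the system `{Z A^(k) X} = 0`, `0 ≤ k ≤ n`. -/
def solSet {m : ℕ} (Z A : Matrix (Fin m) (Fin m) ℝ) (n : ℕ) :
    Set (Matrix (Fin m) (Fin m) ℝ) :=
  { X | ∀ k ≤ n, itComm Z A k * X - X * itComm Z A k = 0 }

/-- Jacobi-type identity for the iterated commutators. -/
lemma itComm_jacobi {m : ℕ} (Z A : Matrix (Fin m) (Fin m) ℝ) (k : ℕ)
    (X : Matrix (Fin m) (Fin m) ℝ) :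
    itComm Z A (k + 1) * X - X * itComm Z A (k + 1) =
      (itComm Z A k * (A * X - X * A) - (A * X - X * A) * itComm Z A k) +
      ((itComm Z A k * X - X * itComm Z A k) * A -
        A * (itComm Z A k * X - X * itComm Z A k)) := by
  simp only [itComm]
  noncomm_ring

lemma solSet_step {m : ℕ} (Z A : Matrix (Fin m) (Fin m) ℝ) (N : ℕ)
    (h : solSet Z A N = solSet Z A (N + 1)) :
    solSet Z A (N + 1) = solSet Z A (N + 2) := by
  ext X
  constructor
  · intro hX k hk
    rcases Nat.lt_or_ge k (N + 2) with hlt | hge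
    · exact hX k (Nat.lt_succ_iff.mp hlt)
    · have hk2 : k = N + 2 := le_antisymm hk hge
      subst hk2
      have hY : (A * X - X * A) ∈ solSet Z A N := by
        intro j hj
        have h1 : itComm Z A (j + 1) * X - X * itComm Z A (j + 1) = 0 :=
          hX (j + 1) (by omega)
        have h2 : itComm Z A j * X - X * itComm Z A j = 0 := hX j (by omega)
        have := itComm_jacobi Z A j X
        rw [h1, h2] at this
        simpa using this.symm
      rw [h] at hY
      have h3 : itComm Z A (N + 1) * (A * X - X * A) -
          (A * X - X * A) * itComm Z A (N + 1) = 0 := hY (N + 1) le_rfl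
      have h4 : itComm Z A (N + 1) * X - X * itComm Z A (N + 1) = 0 :=
        hX (N + 1) (by omega)
      have := itComm_jacobi Z A (N + 1) X
      rw [h3, h4] at this
      simpa using this
  · intro hX k hk
    exact hX k (by omega)

/-- If `𝒳_n = 𝒳_{n+1}` for some `n ≥ 0`, then `𝒳_n = 𝒳_k`
for every `k ≥ n`. -/
theorem stmt_10 {m : ℕ} (Z A : Matrix (Fin m) (Fin m) ℝ) (n : ℕ)
    (h : solSet Z A n = solSet Z A (n + 1)) :
    ∀ k ≥ n, solSet Z A n = solSet Z A k := by
  have step : ∀ j, solSet Z A (n + j) = solSet Z A (n + j + 1) := by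
    intro j
    induction j with
    | zero => exact h
    | succ j ih => exact solSet_step Z A (n + j) ih
  have chain : ∀ j, solSet Z A n = solSet Z A (n + j) := by
    intro j
    induction j with
    | zero => rfl
    | succ j ih => exact ih.trans (step j)
  intro k hk
  have : k = n + (k - n) := by omega
  rw [this]
  exact chain (k - n)
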